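/- Let s ∈ (0,1) and T > 1. Let (a_k)_{k∈ℤ} be a bounded, nonnegative, nonincreasing sequence for which there exists N ∈ ℤ with a_k = 0 for all k ≥ N. Then ∑_{k∈ℤ} a_k^{1−s} T^k ≤ C ∑_{k∈ℤ, a_k ≠ 0} a_{k+1} a_k^{−s} T^k, with the constant C = T^{1/(1−s)}, which depends only on s and T and not on N or the sequence. -/

import Mathlib

open scoped ENNReal

lemma holder_tsum {ι : Type*} (f g : ι → ℝ≥0∞) {p q : ℝ} (hpq : Real.HolderConjugate p q) :
    ∑' k, f k * g k ≤ (∑' k, f k ^ p) ^ (1 / p) * (∑' k, g k ^ q) ^ (1 / q) := by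
  rw [ENNReal.tsum_eq_iSup_sum]
  refine iSup_le fun s => (ENNReal.inner_le_Lp_mul_Lq s f g hpq).trans ?_
  exact mul_le_mul'
    (ENNReal.rpow_le_rpow (ENNReal.sum_le_tsum s) (one_div_nonneg.mpr hpq.pos.le))
    (ENNReal.rpow_le_rpow (ENNReal.sum_le_tsum s) (one_div_nonneg.mpr hpq.symm.pos.le))

lemma holder_tsum' {ι : Type*} (f g : ι → ℝ≥0∞) {p q : ℝ} (hpq : Real.HolderConjugate p q) :
    ∑' k, f k ^ (1 / p) * g k ^ (1 / q) ≤ (∑' k, f k) ^ (1 / p) * (∑' k, g k) ^ (1 / q) := by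
  have h1 : ∀ x : ℝ≥0∞, (x ^ (1 / p)) ^ p = x := fun x => by
    rw [← ENNReal.rpow_mul, one_div, inv_mul_cancel₀ hpq.pos.ne', ENNReal.rpow_one]
  have h2 : ∀ x : ℝ≥0∞, (x ^ (1 / q)) ^ q = x := fun x => by
    rw [← ENNReal.rpow_mul, one_div, inv_mul_cancel₀ hpq.symm.pos.ne', ENNReal.rpow_one]
  have := holder_tsum (fun k => f k ^ (1 / p)) (fun k => g k ^ (1 / q)) hpq
  simpa only [h1, h2] using this

theorem stmt6 (s T : ℝ) (hs0 : 0 < s) (hs1 : s < 1) (hT : 1 < T)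
    (a : ℤ → ℝ) (ha0 : ∀ k : ℤ, 0 ≤ a k) (hbdd : ∃ B : ℝ, ∀ k : ℤ, a k ≤ B)
    (hmono : ∀ k l : ℤ, k ≤ l → a l ≤ a k)
    (hN : ∃ N : ℤ, ∀ k : ℤ, N ≤ k → a k = 0) :
    ∑' k : ℤ, ENNReal.ofReal (a k ^ (1 - s) * T ^ k) ≤
      ENNReal.ofReal (T ^ (1 / (1 - s))) *
        ∑' k : ℤ, (if a k = 0 then 0 else ENNReal.ofReal (a (k + 1) * a k ^ (-s) * T ^ k)) := by
  have hs' : (0:ℝ) < 1 - s := by linarith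
  have hTpos : (0:ℝ) < T := lt_trans one_pos hT
  obtain ⟨B, hB⟩ := hbdd
  obtain ⟨N, hNz⟩ := hN
  have hB0 : 0 ≤ B := le_trans (ha0 0) (hB 0)
  set p : ℝ := 1 / (1 - s) with hp
  set q : ℝ := 1 / s with hq
  have hpq : Real.HolderConjugate p q := by
    rw [Real.holderConjugate_iff]
    constructor
    · rw [hp, lt_div_iff₀ hs']; linarith
    · rw [hp, hq, one_div, one_div, inv_inv, inv_inv]; ring
  have h1p : 1 / p = 1 - s := by rw [hp, one_div_one_div]
  have h1q : 1 / q = s := by rw [hq, one_div_one_div]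
  set L := ∑' k : ℤ, ENNReal.ofReal (a k ^ (1 - s) * T ^ k) with hL
  set R := ∑' k : ℤ, (if a k = 0 then (0:ℝ≥0∞) else
    ENNReal.ofReal (a (k + 1) * a k ^ (-s) * T ^ k)) with hR
  -- reindexing: L = T * S, where S is the shifted sum
  have key : L = ENNReal.ofReal T * ∑' k : ℤ, ENNReal.ofReal (a (k+1) ^ (1 - s) * T ^ k) := by
    rw [hL, ← ENNReal.tsum_mul_left,
      ← (Equiv.addRight (1:ℤ)).tsum_eq (fun k => ENNReal.ofReal (a k ^ (1 - s) * T ^ k))]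
    refine tsum_congr fun k => ?_
    simp only [Equiv.coe_addRight]
    rw [← ENNReal.ofReal_mul hTpos.le]
    congr 1
    rw [zpow_add_one₀ (ne_of_gt hTpos)]
    ring
  -- finiteness of L
  have hLtop : L ≠ ⊤ := by
    have hinj : Function.Injective (fun n : ℕ => N - 1 - (n:ℤ)) := fun m n h => by
      simpa using h
    have hsupp : Function.support (fun k : ℤ => ENNReal.ofReal (a k ^ (1 - s) * T ^ k)) ⊆
        Set.range (fun n : ℕ => N - 1 - (n:ℤ)) := by
      intro k hk
      rcases lt_or_ge k N with hkN | hkN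
      · exact ⟨(N - 1 - k).toNat, by simp; omega⟩
      · exact absurd (by simp [hNz k hkN, Real.zero_rpow hs'.ne']) hk
    rw [hL, ← hinj.tsum_eq hsupp]
    have hbound : ∀ n : ℕ, ENNReal.ofReal (a (N-1-(n:ℤ)) ^ (1 - s) * T ^ (N-1-(n:ℤ)))
        ≤ ENNReal.ofReal (B ^ (1-s) * T ^ (N-1)) * ENNReal.ofReal T⁻¹ ^ n := by
      intro n
      rw [← ENNReal.ofReal_pow (by positivity), ← ENNReal.ofReal_mul (by positivity)]
      apply ENNReal.ofReal_le_ofReal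
      have h2 : (T:ℝ) ^ (N-1-(n:ℤ)) = T ^ (N-1) * T⁻¹ ^ n := by
        rw [zpow_sub₀ hTpos.ne', zpow_natCast, div_eq_mul_inv, inv_pow]
      rw [h2, ← mul_assoc]
      have h1 : a (N-1-(n:ℤ)) ^ (1-s) ≤ B ^ (1-s) :=
        Real.rpow_le_rpow (ha0 _) (hB _) hs'.le
      exact mul_le_mul_of_nonneg_right
        (mul_le_mul_of_nonneg_right h1 (by positivity)) (by positivity)
    refine ne_top_of_le_ne_top ?_ (ENNReal.tsum_le_tsum hbound)
    rw [ENNReal.tsum_mul_left, ENNReal.tsum_geometric]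
    refine ENNReal.mul_ne_top ENNReal.ofReal_ne_top ?_
    rw [Ne, ENNReal.inv_eq_top, tsub_eq_zero_iff_le, not_le, ← ENNReal.ofReal_one]
    exact ENNReal.ofReal_lt_ofReal_iff one_pos |>.mpr (inv_lt_one_of_one_lt₀ hT)
  -- pointwise identity
  have t1 : ∀ k : ℤ, ENNReal.ofReal (a (k+1) ^ (1-s) * T ^ k)
      = (if a k = 0 then (0:ℝ≥0∞) else ENNReal.ofReal (a (k + 1) * a k ^ (-s) * T ^ k)) ^ (1-s)
        * (ENNReal.ofReal (a k ^ (1 - s) * T ^ k)) ^ s := by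
    intro k
    by_cases h : a k = 0
    · have h1 : a (k+1) = 0 := le_antisymm (h ▸ hmono k (k+1) (by omega)) (ha0 _)
      rw [if_pos h, h1, Real.zero_rpow hs'.ne', zero_mul, ENNReal.ofReal_zero,
        ENNReal.zero_rpow_of_pos hs', zero_mul]
    · have hak : 0 < a k := lt_of_le_of_ne (ha0 k) (Ne.symm h)
      have htk : (0:ℝ) < T ^ k := zpow_pos hTpos k
      have hx : 0 ≤ a (k+1) := ha0 _
      rw [if_neg h,
        ENNReal.ofReal_rpow_of_nonneg
          (mul_nonneg (mul_nonneg hx (Real.rpow_nonneg hak.le _)) htk.le) hs'.le,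
        ENNReal.ofReal_rpow_of_nonneg
          (mul_nonneg (Real.rpow_nonneg hak.le _) htk.le) hs0.le,
        ← ENNReal.ofReal_mul (by positivity)]
      congr 1
      have e1 : a k ^ (-s*(1-s)) * a k ^ ((1-s)*s) = 1 := by
        rw [← Real.rpow_add hak, show -s*(1-s) + (1-s)*s = 0 by ring, Real.rpow_zero]
      have e2 : ((T:ℝ)^k) ^ (1-s) * ((T:ℝ)^k) ^ s = T^k := by
        rw [← Real.rpow_add htk, show (1:ℝ)-s+s = 1 by ring, Real.rpow_one]
      symm
      calc (a (k+1) * a k ^ (-s) * T ^ k) ^ (1-s) * (a k ^ (1-s) * T ^ k) ^ s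
          = (a (k+1) ^ (1-s) * (a k ^ (-s)) ^ (1-s) * ((T:ℝ)^k) ^ (1-s))
              * ((a k ^ (1-s)) ^ s * ((T:ℝ)^k) ^ s) := by
            rw [Real.mul_rpow (mul_nonneg hx (Real.rpow_nonneg hak.le _)) htk.le,
                Real.mul_rpow hx (Real.rpow_nonneg hak.le _),
                Real.mul_rpow (Real.rpow_nonneg hak.le _) htk.le]
        _ = a (k+1) ^ (1-s) * (a k ^ (-s*(1-s)) * a k ^ ((1-s)*s))
              * (((T:ℝ)^k) ^ (1-s) * ((T:ℝ)^k) ^ s) := by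
            rw [← Real.rpow_mul hak.le, ← Real.rpow_mul hak.le]; ring
        _ = a (k+1) ^ (1-s) * T ^ k := by rw [e1, e2, mul_one]
  -- Hölder
  have hold : (∑' k : ℤ, ENNReal.ofReal (a (k+1) ^ (1-s) * T ^ k)) ≤ R ^ (1-s) * L ^ s := by
    calc (∑' k : ℤ, ENNReal.ofReal (a (k+1) ^ (1-s) * T ^ k))
        = ∑' k : ℤ, (if a k = 0 then (0:ℝ≥0∞) else
              ENNReal.ofReal (a (k + 1) * a k ^ (-s) * T ^ k)) ^ (1/p)
            * (ENNReal.ofReal (a k ^ (1 - s) * T ^ k)) ^ (1/q) := by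
          rw [h1p, h1q]; exact tsum_congr t1
      _ ≤ (∑' k : ℤ, (if a k = 0 then (0:ℝ≥0∞) else
              ENNReal.ofReal (a (k + 1) * a k ^ (-s) * T ^ k))) ^ (1/p)
            * (∑' k : ℤ, ENNReal.ofReal (a k ^ (1 - s) * T ^ k)) ^ (1/q) :=
          holder_tsum' _ _ hpq
      _ = R ^ (1-s) * L ^ s := by rw [← hR, ← hL, h1p, h1q]
  -- conclusion
  rcases eq_or_ne L 0 with h0 | h0
  · rw [h0]; exact zero_le
  have step : L ≤ ENNReal.ofReal T * (R ^ (1-s) * L ^ s) :=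
    key.le.trans (mul_le_mul_right hold _)
  have hLs_ne0 : L ^ s ≠ 0 := by
    simp [ENNReal.rpow_eq_zero_iff, h0, hLtop]
  have hLs_netop : L ^ s ≠ ⊤ := ENNReal.rpow_ne_top_of_nonneg hs0.le hLtop
  have hcancel : L ^ (1-s) ≤ ENNReal.ofReal T * R ^ (1-s) := by
    rw [← ENNReal.mul_le_mul_iff_left hLs_ne0 hLs_netop]
    calc L ^ (1-s) * L ^ s = L := by
          rw [← ENNReal.rpow_add _ _ h0 hLtop, show (1:ℝ)-s+s = 1 by ring, ENNReal.rpow_one]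
      _ ≤ ENNReal.ofReal T * (R ^ (1-s) * L ^ s) := step
      _ = ENNReal.ofReal T * R ^ (1-s) * L ^ s := by ring
  have final := ENNReal.rpow_le_rpow hcancel (le_of_lt (by positivity : (0:ℝ) < p))
  rw [← ENNReal.rpow_mul, show (1-s) * p = 1 by rw [hp]; field_simp, ENNReal.rpow_one,
    ENNReal.mul_rpow_of_nonneg _ _ hpq.pos.le, ← ENNReal.rpow_mul,
    show (1-s) * p = 1 by rw [hp]; field_simp, ENNReal.rpow_one,
    ENNReal.ofReal_rpow_of_pos hTpos] at final
  exact final
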